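/- arXiv:2103.12717 — 4 statements merged into one kernel-verified Lean document; each statement's English description precedes it below -/
import Mathlib

section
/- Let 𝒢 be a finite groupoid and ε a U(1)-valued groupoid 1-cocycle on 𝒢. Then Σ_{[g] ∈ π₀(Λ𝒢)} ε(g) / |Aut_{Λ𝒢}(g)| = dim_ℂ V_𝒢(ε), i.e. the groupoid integral of the transgressed 0-cocycle t(ε)(g) = ε(g) over the loop groupoid Λ𝒢 equals the complex dimension of the vector space V_𝒢(ε). (This is the 'crossing with the circle' condition ∫_{Λ𝒢} t(ε) = Dim_ℂ V_𝒢(ε); applied to 𝒢 = Λ³G, ε = t³(π) it gives Dim_ℂ 𝒵^π_G(𝕋³) = 𝒵^π_G(𝕋⁴).) -/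
open CategoryTheory

/-- A `U(1)`-valued groupoid 1-cocycle on a groupoid `G`. -/
structure OneCocycle (G : Type) [Groupoid.{0} G] : Type where
  toFun : ∀ {X Y : G}, (X ⟶ Y) → ℂ
  abs_toFun : ∀ {X Y : G} (g : X ⟶ Y), ‖toFun g‖ = 1
  cocycle : ∀ {X Y Z : G} (g : X ⟶ Y) (h : Y ⟶ Z), toFun (g ≫ h) = toFun g * toFun h

/-- The loops of a groupoid `G`, i.e. the objects of the loop groupoid `Λ𝒢`. -/
abbrev Loop (G : Type) [Groupoid.{0} G] : Type := Σ X : G, X ⟶ X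

/-- Two loops are related iff they are connected in the loop groupoid `Λ𝒢`, i.e. one is a
conjugate of the other. -/
def loopRel {G : Type} [Groupoid.{0} G] (l l' : Loop G) : Prop :=
  ∃ h : l.1 ⟶ l'.1, Groupoid.inv h ≫ l.2 ≫ h = l'.2

/-- The automorphism group of a loop `l` as an object of the loop groupoid `Λ𝒢`. -/
abbrev LoopAut {G : Type} [Groupoid.{0} G] (l : Loop G) : Type :=
  {h : l.1 ⟶ l.1 // Groupoid.inv h ≫ l.2 ≫ h = l.2}

/-- The vector space `V_𝒢(ε)` of functions `s` on objects with `s(Y) = ε(g) s(X)` for every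
morphism `g : X ⟶ Y`. -/
noncomputable def Veps {G : Type} [Groupoid.{0} G] (ε : OneCocycle G) :
    Submodule ℂ (G → ℂ) where
  carrier := {s | ∀ (X Y : G) (g : X ⟶ Y), s Y = ε.toFun g * s X}
  add_mem' := by
    intro a b ha hb X Y g
    simp only [Pi.add_apply, ha X Y g, hb X Y g]; ring
  zero_mem' := by intro X Y g; simp
  smul_mem' := by
    intro c a ha X Y g
    simp only [Pi.smul_apply, smul_eq_mul, ha X Y g]; ring

set_option linter.unusedSectionVars false

section Aux

variable {G : Type} [Groupoid.{0} G] [Fintype G] [∀ X Y : G, Fintype (X ⟶ Y)]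
variable (ε : OneCocycle G)

lemma eps_ne_zero {X Y : G} (g : X ⟶ Y) : ε.toFun g ≠ 0 := by
  intro h
  have := ε.abs_toFun g
  rw [h] at this
  simp at this

lemma eps_id (X : G) : ε.toFun (𝟙 X) = 1 := by
  have h := ε.cocycle (𝟙 X) (𝟙 X)
  rw [Category.comp_id] at h
  have h2 : ε.toFun (𝟙 X) * 1 = ε.toFun (𝟙 X) * ε.toFun (𝟙 X) := by
    rw [mul_one]; exact h
  exact (mul_left_cancel₀ (eps_ne_zero ε _) h2).symm

lemma eps_inv_mul {X Y : G} (h : X ⟶ Y) : ε.toFun (Groupoid.inv h) * ε.toFun h = 1 := by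
  rw [← ε.cocycle, Groupoid.inv_comp, eps_id]

lemma eps_conj {X Y : G} (h : X ⟶ Y) (g : X ⟶ X) :
    ε.toFun (Groupoid.inv h ≫ g ≫ h) = ε.toFun g := by
  rw [ε.cocycle, ε.cocycle]
  calc ε.toFun (Groupoid.inv h) * (ε.toFun g * ε.toFun h)
      = ε.toFun g * (ε.toFun (Groupoid.inv h) * ε.toFun h) := by ring
    _ = ε.toFun g := by rw [eps_inv_mul]; ring

def Mnum (Y : G) : ℕ := ∑ X : G, Fintype.card (X ⟶ Y)

lemma Mnum_pos (Y : G) : 0 < Mnum Y := by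
  have h1 : 0 < Fintype.card (Y ⟶ Y) := Fintype.card_pos_iff.2 ⟨𝟙 Y⟩
  calc 0 < Fintype.card (Y ⟶ Y) := h1
    _ ≤ Mnum Y := Finset.single_le_sum (f := fun X => Fintype.card (X ⟶ Y))
        (fun _ _ => Nat.zero_le _) (Finset.mem_univ Y)

lemma Mnum_ne_zero (Y : G) : ((Mnum Y : ℂ)) ≠ 0 := by
  exact_mod_cast (Mnum_pos Y).ne'

lemma Mnum_iso {Y Y' : G} (h : Y ⟶ Y') : Mnum Y = Mnum Y' := by
  refine Finset.sum_congr rfl fun X _ => Fintype.card_congr ?_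
  exact ⟨fun g => g ≫ h, fun g => g ≫ Groupoid.inv h, fun g => by simp, fun g => by simp⟩

lemma Mnum_out (Y : G) : Mnum Y = ∑ X : G, Fintype.card (Y ⟶ X) := by
  refine Finset.sum_congr rfl fun X _ => Fintype.card_congr ?_
  exact ⟨Groupoid.inv, Groupoid.inv, fun g => by simp, fun g => by simp⟩

noncomputable def Pop : (G → ℂ) →ₗ[ℂ] (G → ℂ) where
  toFun s Y := (∑ X : G, ∑ g : X ⟶ Y, ε.toFun g * s X) / (Mnum Y : ℂ)
  map_add' a b := by
    funext Y
    simp only [Pi.add_apply, mul_add, Finset.sum_add_distrib, add_div]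
  map_smul' c a := by
    funext Y
    simp only [Pi.smul_apply, smul_eq_mul, RingHom.id_apply]
    rw [← mul_div_assoc, Finset.mul_sum]
    congr 1
    refine Finset.sum_congr rfl fun X _ => ?_
    rw [Finset.mul_sum]
    exact Finset.sum_congr rfl fun g _ => by ring

lemma Pop_apply (s : G → ℂ) (Y : G) :
    Pop ε s Y = (∑ X : G, ∑ g : X ⟶ Y, ε.toFun g * s X) / (Mnum Y : ℂ) := rfl

lemma Pop_isProj : LinearMap.IsProj (Veps ε) (Pop ε) := by
  constructor
  · -- maps into Veps
    intro s Y Y' h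
    rw [Pop_apply, Pop_apply]
    rw [← Mnum_iso h]
    rw [← mul_div_assoc, Finset.mul_sum]
    congr 1
    refine Finset.sum_congr rfl fun X _ => ?_
    rw [Finset.mul_sum]
    refine Fintype.sum_equiv
      ⟨fun g : (X ⟶ Y') => g ≫ Groupoid.inv h, fun g => g ≫ h, fun g => by simp, fun g => by simp⟩
      _ _ (fun g => ?_)
    dsimp
    have h1 : ε.toFun (g ≫ Groupoid.inv h) * ε.toFun h = ε.toFun g := by
      rw [← ε.cocycle]
      congr 1
      simp
    rw [← h1]
    ring
  · intro s hs
    funext Y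
    rw [Pop_apply]
    have hsum : ∀ X : G, ∑ g : X ⟶ Y, ε.toFun g * s X = (Fintype.card (X ⟶ Y) : ℂ) * s Y := by
      intro X
      rw [Finset.sum_congr rfl (fun g _ => (hs X Y g).symm)]
      simp [Finset.sum_const, Finset.card_univ, mul_comm]
    rw [Finset.sum_congr rfl fun X _ => hsum X, ← Finset.sum_mul]
    rw [show (∑ X : G, (Fintype.card (X ⟶ Y) : ℂ)) = (Mnum Y : ℂ) by rw [Mnum]; push_cast; ring]
    rw [mul_comm, mul_div_assoc, div_self (Mnum_ne_zero Y), mul_one]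

lemma trace_Pop [DecidableEq G] :
    LinearMap.trace ℂ (G → ℂ) (Pop ε) = ∑ Y : G, (∑ g : Y ⟶ Y, ε.toFun g) / (Mnum Y : ℂ) := by
  rw [LinearMap.trace_eq_matrix_trace ℂ (Pi.basisFun ℂ G), Matrix.trace]
  refine Finset.sum_congr rfl fun Y _ => ?_
  rw [Matrix.diag_apply, LinearMap.toMatrix_apply, Pi.basisFun_repr, Pi.basisFun_apply,
    Pop_apply]
  congr 1
  rw [Finset.sum_eq_single Y]
  · simp
  · intro X _ hX
    simp [Pi.single_apply, hX]
  · simp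

def conjMap (r : Loop G) (t : Σ Y : G, (r.1 ⟶ Y)) : Loop G :=
  ⟨t.1, Groupoid.inv t.2 ≫ r.2 ≫ t.2⟩

lemma loopRel_conjMap (r : Loop G) (t : Σ Y : G, (r.1 ⟶ Y)) : loopRel r (conjMap r t) :=
  ⟨t.2, rfl⟩

lemma fiber_card [DecidableEq G] [∀ X Y : G, DecidableEq (X ⟶ Y)]
    (r : Loop G) (l : Loop G) (hl : loopRel r l)
    [DecidablePred (fun t : Σ Y : G, (r.1 ⟶ Y) => conjMap r t = l)] :
    (Finset.univ.filter (fun t : Σ Y : G, (r.1 ⟶ Y) => conjMap r t = l)).card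
      = Fintype.card (LoopAut r) := by
  obtain ⟨L, gL⟩ := l
  obtain ⟨h₀, hh₀⟩ := hl
  dsimp only at h₀ hh₀
  rw [← Fintype.card_subtype]
  refine (Fintype.card_congr (Equiv.ofBijective
    (fun a : LoopAut r =>
      (⟨⟨L, a.1 ≫ h₀⟩, by
        have a2 := a.2
        show (⟨L, Groupoid.inv (a.1 ≫ h₀) ≫ r.2 ≫ a.1 ≫ h₀⟩ : Loop G) = ⟨L, gL⟩
        refine congrArg (Sigma.mk L) ?_
        rw [← hh₀]
        simp only [Groupoid.inv_eq_inv, IsIso.inv_comp, Category.assoc] at a2 ⊢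
        calc CategoryTheory.inv h₀ ≫ CategoryTheory.inv a.1 ≫ r.2 ≫ a.1 ≫ h₀
            = CategoryTheory.inv h₀ ≫ (CategoryTheory.inv a.1 ≫ r.2 ≫ a.1) ≫ h₀ := by simp
          _ = CategoryTheory.inv h₀ ≫ r.2 ≫ h₀ := by rw [a2]⟩ :
        {t : Σ Y : G, (r.1 ⟶ Y) // conjMap r t = ⟨L, gL⟩})) ⟨?_, ?_⟩)).symm
  · intro a b hab
    have h0 := Subtype.ext_iff.1 hab
    have h1 : a.1 ≫ h₀ = b.1 ≫ h₀ := by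
      simpa [Sigma.ext_iff] using h0
    exact Subtype.ext ((cancel_mono h₀).1 h1)
  · rintro ⟨⟨Y, h⟩, ht⟩
    have hY : Y = L := congrArg Sigma.fst ht
    subst hY
    have h2 : Groupoid.inv h ≫ r.2 ≫ h = gL := by
      simpa [conjMap, Sigma.ext_iff] using ht
    refine ⟨⟨h ≫ Groupoid.inv h₀, ?_⟩, ?_⟩
    · simp only [Groupoid.inv_eq_inv, IsIso.inv_comp, Category.assoc] at h2 hh₀ ⊢
      calc CategoryTheory.inv (CategoryTheory.inv h₀) ≫ CategoryTheory.inv h ≫ r.2 ≫ h ≫ CategoryTheory.inv h₀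
          = h₀ ≫ (CategoryTheory.inv h ≫ r.2 ≫ h) ≫ CategoryTheory.inv h₀ := by simp
        _ = h₀ ≫ gL ≫ CategoryTheory.inv h₀ := by rw [h2]
        _ = h₀ ≫ (CategoryTheory.inv h₀ ≫ r.2 ≫ h₀) ≫ CategoryTheory.inv h₀ := by rw [hh₀]
        _ = r.2 := by simp
    · apply Subtype.ext
      show (⟨Y, (h ≫ Groupoid.inv h₀) ≫ h₀⟩ : Σ Z : G, (r.1 ⟶ Z)) = ⟨Y, h⟩
      refine congrArg (Sigma.mk Y) ?_
      simp [Groupoid.inv_eq_inv]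

lemma class_card [DecidableEq G] [∀ X Y : G, DecidableEq (X ⟶ Y)]
    (r : Loop G) [DecidablePred (loopRel r)] :
    (Finset.univ.filter (fun l : Loop G => loopRel r l)).card * Fintype.card (LoopAut r)
      = Mnum r.1 := by
  classical
  have h1 : Fintype.card (Σ Y : G, (r.1 ⟶ Y)) = Mnum r.1 := by
    rw [Fintype.card_sigma, Mnum_out]
  rw [← h1,
    show Fintype.card ((Y : G) × (r.1 ⟶ Y))
      = (Finset.univ : Finset ((Y : G) × (r.1 ⟶ Y))).card from (Finset.card_univ).symm,
    Finset.card_eq_sum_card_fiberwise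
      (f := conjMap r) (t := Finset.univ.filter (fun l : Loop G => loopRel r l))
      (fun t _ => Finset.mem_filter.2 ⟨Finset.mem_univ _, loopRel_conjMap r t⟩)]
  rw [Finset.sum_congr rfl (fun l hl => fiber_card r l (Finset.mem_filter.1 hl).2),
    Finset.sum_const, smul_eq_mul]

lemma sum_class [DecidableEq G] [∀ X Y : G, DecidableEq (X ⟶ Y)]
    (r : Loop G) [DecidablePred (loopRel r)] :
    ∑ l ∈ Finset.univ.filter (fun l : Loop G => loopRel r l),
        ε.toFun l.2 / (Mnum l.1 : ℂ)
      = ε.toFun r.2 / (Fintype.card (LoopAut r) : ℂ) := by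
  have hconst : ∀ l ∈ Finset.univ.filter (fun l : Loop G => loopRel r l),
      ε.toFun l.2 / (Mnum l.1 : ℂ) = ε.toFun r.2 / (Mnum r.1 : ℂ) := by
    intro l hl
    obtain ⟨h, hh⟩ := (Finset.mem_filter.1 hl).2
    rw [← hh, eps_conj, ← Mnum_iso h]
  rw [Finset.sum_congr rfl hconst, Finset.sum_const, nsmul_eq_mul]
  have hA : (Fintype.card (LoopAut r) : ℂ) ≠ 0 := by
    have : 0 < Fintype.card (LoopAut r) :=
      Fintype.card_pos_iff.2 ⟨⟨𝟙 r.1, by simp⟩⟩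
    exact_mod_cast this.ne'
  have hM : ((Mnum r.1 : ℂ)) ≠ 0 := Mnum_ne_zero r.1
  have hcast : ((Finset.univ.filter (fun l : Loop G => loopRel r l)).card : ℂ)
      * (Fintype.card (LoopAut r) : ℂ) = (Mnum r.1 : ℂ) := by
    exact_mod_cast congrArg (Nat.cast : ℕ → ℂ) (class_card r)
  field_simp
  linear_combination ε.toFun r.2 * hcast

end Aux

/-- For a finite groupoid `𝒢` and a `U(1)`-valued 1-cocycle `ε`, the
groupoid integral `∑_{[g] ∈ π₀(Λ𝒢)} ε(g)/|Aut_{Λ𝒢}(g)|` of the transgressed 0-cocycle over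
the loop groupoid equals the complex dimension of `V_𝒢(ε)`.  The sum is taken over any
system `R` of representatives of the connected components of `Λ𝒢`. -/
theorem integral_loopGroupoid_eq_dim_V
    (G : Type) [Groupoid.{0} G] [Fintype G] [∀ X Y : G, Fintype (X ⟶ Y)]
    [DecidableEq G] [∀ X Y : G, DecidableEq (X ⟶ Y)]
    (ε : OneCocycle G) (R : Finset (Loop G))
    (hR : ∀ l : Loop G, ∃! r : Loop G, r ∈ R ∧ loopRel r l) :
    ∑ r ∈ R, ε.toFun r.2 / (Fintype.card (LoopAut r) : ℂ)
      = (Module.finrank ℂ (Veps ε) : ℂ) := by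
  classical
  have hproj := Pop_isProj ε
  have htr := hproj.trace
  rw [← htr, trace_Pop]
  have hrep : ∀ l : Loop G, (Classical.choose (hR l)) ∈ R ∧
      loopRel (Classical.choose (hR l)) l :=
    fun l => (Classical.choose_spec (hR l)).1
  calc ∑ r ∈ R, ε.toFun r.2 / (Fintype.card (LoopAut r) : ℂ)
      = ∑ r ∈ R, ∑ l ∈ Finset.univ.filter (fun l : Loop G => loopRel r l),
          ε.toFun l.2 / (Mnum l.1 : ℂ) :=
        Finset.sum_congr rfl fun r _ => (sum_class ε r).symm
    _ = ∑ r ∈ R, ∑ l ∈ Finset.univ.filter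
          (fun l : Loop G => Classical.choose (hR l) = r),
          ε.toFun l.2 / (Mnum l.1 : ℂ) := by
        refine Finset.sum_congr rfl fun r hr => ?_
        congr 1
        refine Finset.filter_congr fun l _ => ?_
        constructor
        · intro hrel
          exact ((Classical.choose_spec (hR l)).2 r ⟨hr, hrel⟩).symm
        · intro h
          exact h ▸ (hrep l).2
    _ = ∑ l : Loop G, ε.toFun l.2 / (Mnum l.1 : ℂ) :=
        Finset.sum_fiberwise_of_maps_to (fun l _ => (hrep l).1) _
    _ = ∑ Y : G, ∑ g : Y ⟶ Y, ε.toFun g / (Mnum Y : ℂ) := by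
        rw [show (Finset.univ : Finset (Loop G))
            = Finset.univ.sigma (fun _ => Finset.univ) from (Finset.univ_sigma_univ).symm,
          Finset.sum_sigma]
    _ = ∑ Y : G, (∑ g : Y ⟶ Y, ε.toFun g) / (Mnum Y : ℂ) := by
        simp [Finset.sum_div]
end

section
/- Let 𝒢 be a finite groupoid and β a normalized U(1)-valued 2-cocycle on 𝒢. The assignment s ↦ Σ_X Σ_{g ∈ End_𝒢(X)} conj(s(g)) |g⟩ (complex conjugate coefficients) defines a bijection from the vector space V_{Λ𝒢}(t(β)) onto the centre Z(ℂ[𝒢]^β) of the twisted groupoid algebra; in particular dim_ℂ V_{Λ𝒢}(t(β)) = dim_ℂ Z(ℂ[𝒢]^β). (Applied to 𝒢 = Λ²G and β = t²(π), this is the paper's isomorphism V_{Λ³G}(t³(π)) ≅ Z(ℂ[Λ²G]^{t²(π)}).) -/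
open CategoryTheory

structure TwoCocycle (G : Type) [Groupoid.{0} G] : Type where
  toFun : ∀ {X Y Z : G}, (X ⟶ Y) → (Y ⟶ Z) → ℂ
  abs_toFun : ∀ {X Y Z : G} (f : X ⟶ Y) (g : Y ⟶ Z), ‖toFun f g‖ = 1
  cocycle : ∀ {X Y Z W : G} (f : X ⟶ Y) (g : Y ⟶ Z) (h : Z ⟶ W),
    toFun g h * toFun f (g ≫ h) = toFun (f ≫ g) h * toFun f g
  id_left : ∀ {X Y : G} (g : X ⟶ Y), toFun (𝟙 X) g = 1
  id_right : ∀ {X Y : G} (g : X ⟶ Y), toFun g (𝟙 Y) = 1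

abbrev Mor (G : Type) [Groupoid.{0} G] : Type := Σ X Y : G, X ⟶ Y

def cnj {G : Type} [Groupoid.{0} G] {X Y : G} (g : X ⟶ X) (h : X ⟶ Y) : Y ⟶ Y :=
  Groupoid.inv h ≫ g ≫ h

noncomputable def bv {G : Type} [Groupoid.{0} G] [DecidableEq G]
    [∀ X Y : G, DecidableEq (X ⟶ Y)] (f : Mor G) : Mor G → ℂ :=
  fun m => if m = f then 1 else 0

noncomputable def mulFun {G : Type} [Groupoid.{0} G] [Fintype G]
    [∀ X Y : G, Fintype (X ⟶ Y)] [∀ X Y : G, DecidableEq (X ⟶ Y)]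
    (β : TwoCocycle G) (x y : Mor G → ℂ) : Mor G → ℂ :=
  fun m => ∑ Y : G, ∑ f : m.1 ⟶ Y, ∑ g : Y ⟶ m.2.1,
    (if f ≫ g = m.2.2 then β.toFun f g else 0) * x ⟨m.1, Y, f⟩ * y ⟨Y, m.2.1, g⟩

set_option linter.unusedSectionVars false

section

variable {G : Type} [Groupoid.{0} G] [Fintype G]
    [∀ X Y : G, Fintype (X ⟶ Y)] [DecidableEq G] [∀ X Y : G, DecidableEq (X ⟶ Y)]

theorem mulFun_add_left (β : TwoCocycle G) (a b x : Mor G → ℂ) :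
    mulFun β (a + b) x = mulFun β a x + mulFun β b x := by
  funext m; simp [mulFun, mul_add, add_mul, Finset.sum_add_distrib]

theorem mulFun_add_right (β : TwoCocycle G) (a x y : Mor G → ℂ) :
    mulFun β a (x + y) = mulFun β a x + mulFun β a y := by
  funext m; simp [mulFun, mul_add, add_mul, Finset.sum_add_distrib]

theorem mulFun_smul_left (β : TwoCocycle G) (c : ℂ) (a x : Mor G → ℂ) :
    mulFun β (c • a) x = c • mulFun β a x := by
  funext m
  simp [mulFun, Finset.mul_sum]
  congr 1; funext Y; congr 1; funext f; congr 1; funext g; ring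

theorem mulFun_smul_right (β : TwoCocycle G) (c : ℂ) (a x : Mor G → ℂ) :
    mulFun β a (c • x) = c • mulFun β a x := by
  funext m
  simp [mulFun, Finset.mul_sum]
  congr 1; funext Y; congr 1; funext f; congr 1; funext g; ring

theorem mulFun_zero_left (β : TwoCocycle G) (x : Mor G → ℂ) : mulFun β 0 x = 0 := by
  funext m; simp [mulFun]

theorem mulFun_zero_right (β : TwoCocycle G) (x : Mor G → ℂ) : mulFun β x 0 = 0 := by
  funext m; simp [mulFun]

/-- The centre `Z(ℂ[𝒢]^β)` of the twisted groupoid algebra, as a `ℂ`-subspace of the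
algebra (identified with the space of `ℂ`-valued functions on morphisms). -/
noncomputable def centreSub (β : TwoCocycle G) : Submodule ℂ (Mor G → ℂ) where
  carrier := {z | ∀ x : Mor G → ℂ, mulFun β z x = mulFun β x z}
  add_mem' := by
    intro a b ha hb x
    rw [mulFun_add_left, mulFun_add_right, ha x, hb x]
  zero_mem' := by
    intro x
    rw [mulFun_zero_left, mulFun_zero_right]
  smul_mem' := by
    intro c a ha x
    rw [mulFun_smul_left, mulFun_smul_right, ha x]

/-- The `S¹`-transgression of the 2-cocycle `β`, a 1-cocycle on the loop groupoid `Λ𝒢`,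
evaluated on the morphism `(g → h)` of `Λ𝒢`. -/
noncomputable def tBeta (β : TwoCocycle G) {X Y : G} (g : X ⟶ X) (h : X ⟶ Y) : ℂ :=
  β.toFun h (cnj g h) * (β.toFun g h)⁻¹

/-- The vector space `V_{Λ𝒢}(t(β))` of functions on the loops of `𝒢` satisfying
`s(h⁻¹gh) = t(β)(g → h) · s(g)`. -/
noncomputable def VLoop (β : TwoCocycle G) : Submodule ℂ (Loop G → ℂ) where
  carrier := {s | ∀ (X Y : G) (g : X ⟶ X) (h : X ⟶ Y),
    s ⟨Y, cnj g h⟩ = tBeta β g h * s ⟨X, g⟩}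
  add_mem' := by
    intro a b ha hb X Y g h
    simp only [Pi.add_apply, ha X Y g h, hb X Y g h]; ring
  zero_mem' := by intro X Y g h; simp
  smul_mem' := by
    intro c a ha X Y g h
    simp only [Pi.smul_apply, smul_eq_mul, ha X Y g h]; ring

/-- The map `s ↦ ∑_X ∑_{g ∈ End(X)} conj(s(g)) |g⟩` from functions on loops to elements
of the twisted groupoid algebra. -/
noncomputable def centreMap (s : Loop G → ℂ) : Mor G → ℂ :=
  ∑ X : G, ∑ g : X ⟶ X, (starRingEnd ℂ) (s ⟨X, g⟩) • bv (⟨X, X, g⟩ : Mor G)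

end

section Helpers

variable {G : Type} [Groupoid.{0} G] [Fintype G]
    [∀ X Y : G, Fintype (X ⟶ Y)] [DecidableEq G] [∀ X Y : G, DecidableEq (X ⟶ Y)]

lemma beta_ne_zero (β : TwoCocycle G) {X Y Z : G} (f : X ⟶ Y) (g : Y ⟶ Z) :
    β.toFun f g ≠ 0 := by
  intro h
  have := β.abs_toFun f g
  rw [h] at this
  simp at this

lemma conj_beta (β : TwoCocycle G) {X Y Z : G} (f : X ⟶ Y) (g : Y ⟶ Z) :
    (starRingEnd ℂ) (β.toFun f g) = (β.toFun f g)⁻¹ := by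
  refine eq_inv_of_mul_eq_one_right ?_
  rw [Complex.mul_conj]
  norm_cast
  rw [Complex.normSq_eq_norm_sq, β.abs_toFun]
  norm_num

lemma mor_eq_obj₁ {m n : Mor G} (h : m = n) : m.1 = n.1 := by rw [h]

lemma mor_eq_obj₂ {m n : Mor G} (h : m = n) : m.2.1 = n.2.1 := by rw [h]

lemma bv_ne_fst {X Y A B : G} (h0 : X ⟶ Y) (f : A ⟶ B) (hne : A ≠ X) :
    bv (⟨X, Y, h0⟩ : Mor G) ⟨A, B, f⟩ = 0 := by
  rw [bv, if_neg]
  intro h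
  exact hne (mor_eq_obj₁ h)

lemma bv_ne_snd {X Y A B : G} (h0 : X ⟶ Y) (f : A ⟶ B) (hne : B ≠ Y) :
    bv (⟨X, Y, h0⟩ : Mor G) ⟨A, B, f⟩ = 0 := by
  rw [bv, if_neg]
  intro h
  exact hne (mor_eq_obj₂ h)

lemma bv_apply_same {X Y : G} (h0 f : X ⟶ Y) :
    bv (⟨X, Y, h0⟩ : Mor G) ⟨X, Y, f⟩ = if f = h0 then 1 else 0 := by
  simp [bv]

lemma centreMap_apply_loop (s : Loop G → ℂ) (X : G) (g : X ⟶ X) :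
    centreMap s ⟨X, X, g⟩ = (starRingEnd ℂ) (s ⟨X, g⟩) := by
  rw [centreMap]
  rw [Finset.sum_apply]
  rw [Finset.sum_eq_single X]
  · rw [Finset.sum_apply, Finset.sum_eq_single g]
    · simp [bv_apply_same]
    · intro g' _ hg'
      simp [bv_apply_same, hg'.symm]
    · simp
  · intro X' _ hX'
    rw [Finset.sum_apply]
    apply Finset.sum_eq_zero
    intro g' _
    simp [bv_ne_fst _ _ hX'.symm]
  · simp

lemma centreMap_apply_ne (s : Loop G → ℂ) {X Y : G} (hne : X ≠ Y) (f : X ⟶ Y) :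
    centreMap s ⟨X, Y, f⟩ = 0 := by
  rw [centreMap, Finset.sum_apply]
  apply Finset.sum_eq_zero
  intro X' _
  rw [Finset.sum_apply]
  apply Finset.sum_eq_zero
  intro g' _
  by_cases h : X = X'
  · subst h
    simp [bv_ne_snd _ _ hne.symm]
  · simp [bv_ne_fst _ _ h]

lemma sum_ite_comp_right {A Y B : G} (f : A ⟶ Y) (k : A ⟶ B) (c : (Y ⟶ B) → ℂ) :
    (∑ g : Y ⟶ B, if f ≫ g = k then c g else 0) = c (Groupoid.inv f ≫ k) := by
  rw [Finset.sum_eq_single (Groupoid.inv f ≫ k)]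
  · rw [if_pos]
    simp [Groupoid.inv_eq_inv]
  · intro g _ hg
    rw [if_neg]
    intro h
    apply hg
    rw [← h]
    simp [Groupoid.inv_eq_inv]
  · simp

lemma sum_ite_comp_left {A Y B : G} (g : Y ⟶ B) (k : A ⟶ B) (c : (A ⟶ Y) → ℂ) :
    (∑ f : A ⟶ Y, if f ≫ g = k then c f else 0) = c (k ≫ Groupoid.inv g) := by
  rw [Finset.sum_eq_single (k ≫ Groupoid.inv g)]
  · rw [if_pos]
    simp [Groupoid.inv_eq_inv]
  · intro f _ hf
    rw [if_neg]
    intro h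
    apply hf
    rw [← h]
    simp [Groupoid.inv_eq_inv]
  · simp

lemma mulFun_centreMap_left (β : TwoCocycle G) (s : Loop G → ℂ) (x : Mor G → ℂ)
    (A B : G) (k : A ⟶ B) :
    mulFun β (centreMap s) x ⟨A, B, k⟩ =
      ∑ f : A ⟶ A, β.toFun f (Groupoid.inv f ≫ k) * (starRingEnd ℂ) (s ⟨A, f⟩)
        * x ⟨A, B, Groupoid.inv f ≫ k⟩ := by
  rw [mulFun]
  rw [Finset.sum_eq_single A]
  · apply Finset.sum_congr rfl
    intro f _
    rw [centreMap_apply_loop]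
    rw [show (∑ g : A ⟶ B, (if f ≫ g = k then β.toFun f g else 0) *
        (starRingEnd ℂ) (s ⟨A, f⟩) * x ⟨A, B, g⟩) =
        ∑ g : A ⟶ B, if f ≫ g = k then β.toFun f g * (starRingEnd ℂ) (s ⟨A, f⟩)
          * x ⟨A, B, g⟩ else 0 by
      apply Finset.sum_congr rfl; intro g _; split <;> simp]
    rw [sum_ite_comp_right]
  · intro Y _ hY
    apply Finset.sum_eq_zero
    intro f _
    apply Finset.sum_eq_zero
    intro g _
    rw [centreMap_apply_ne s (Ne.symm hY)]
    ring
  · simp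

lemma mulFun_centreMap_right (β : TwoCocycle G) (s : Loop G → ℂ) (x : Mor G → ℂ)
    (A B : G) (k : A ⟶ B) :
    mulFun β x (centreMap s) ⟨A, B, k⟩ =
      ∑ g : B ⟶ B, β.toFun (k ≫ Groupoid.inv g) g * x ⟨A, B, k ≫ Groupoid.inv g⟩
        * (starRingEnd ℂ) (s ⟨B, g⟩) := by
  rw [mulFun]
  rw [Finset.sum_eq_single B]
  · rw [Finset.sum_comm]
    apply Finset.sum_congr rfl
    intro g _
    rw [centreMap_apply_loop]
    rw [show (∑ f : A ⟶ B, (if f ≫ g = k then β.toFun f g else 0) *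
        x ⟨A, B, f⟩ * (starRingEnd ℂ) (s ⟨B, g⟩)) =
        ∑ f : A ⟶ B, if f ≫ g = k then β.toFun f g * x ⟨A, B, f⟩
          * (starRingEnd ℂ) (s ⟨B, g⟩) else 0 by
      apply Finset.sum_congr rfl; intro f _; split <;> simp]
    rw [sum_ite_comp_left]
  · intro Y _ hY
    apply Finset.sum_eq_zero
    intro f _
    apply Finset.sum_eq_zero
    intro g _
    rw [centreMap_apply_ne s hY]
    ring
  · simp

lemma mulFun_bv_right (β : TwoCocycle G) (z : Mor G → ℂ) (A B Y : G)
    (k : A ⟶ B) (h0 : Y ⟶ B) :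
    mulFun β z (bv (⟨Y, B, h0⟩ : Mor G)) ⟨A, B, k⟩ =
      β.toFun (k ≫ Groupoid.inv h0) h0 * z ⟨A, Y, k ≫ Groupoid.inv h0⟩ := by
  rw [mulFun]
  rw [Finset.sum_eq_single Y]
  · rw [show (∑ f : A ⟶ Y, ∑ g : Y ⟶ B, (if f ≫ g = k then β.toFun f g else 0) *
        z ⟨A, Y, f⟩ * bv (⟨Y, B, h0⟩ : Mor G) ⟨Y, B, g⟩) =
        ∑ f : A ⟶ Y, if f ≫ h0 = k then β.toFun f h0 * z ⟨A, Y, f⟩ else 0 by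
      apply Finset.sum_congr rfl
      intro f _
      rw [Finset.sum_eq_single h0]
      · rw [bv_apply_same, if_pos rfl]
        split <;> simp
      · intro g _ hg
        rw [bv_apply_same, if_neg hg]
        ring
      · simp]
    rw [sum_ite_comp_left]
  · intro Y' _ hY'
    apply Finset.sum_eq_zero
    intro f _
    apply Finset.sum_eq_zero
    intro g _
    rw [bv_ne_fst _ _ hY']
    ring
  · simp

lemma mulFun_bv_left (β : TwoCocycle G) (z : Mor G → ℂ) (A B Y : G)
    (k : A ⟶ B) (f0 : A ⟶ Y) :
    mulFun β (bv (⟨A, Y, f0⟩ : Mor G)) z ⟨A, B, k⟩ =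
      β.toFun f0 (Groupoid.inv f0 ≫ k) * z ⟨Y, B, Groupoid.inv f0 ≫ k⟩ := by
  rw [mulFun]
  rw [Finset.sum_eq_single Y]
  · rw [show (∑ f : A ⟶ Y, ∑ g : Y ⟶ B, (if f ≫ g = k then β.toFun f g else 0) *
        bv (⟨A, Y, f0⟩ : Mor G) ⟨A, Y, f⟩ * z ⟨Y, B, g⟩) =
        ∑ g : Y ⟶ B, if f0 ≫ g = k then β.toFun f0 g * z ⟨Y, B, g⟩ else 0 by
      rw [Finset.sum_comm]
      apply Finset.sum_congr rfl
      intro g _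
      rw [Finset.sum_eq_single f0]
      · rw [bv_apply_same, if_pos rfl]
        split <;> simp
      · intro f _ hf
        rw [bv_apply_same, if_neg hf]
        ring
      · simp]
    rw [sum_ite_comp_right]
  · intro Y' _ hY'
    apply Finset.sum_eq_zero
    intro f _
    apply Finset.sum_eq_zero
    intro g _
    rw [bv_ne_snd _ _ hY']
    ring
  · simp

lemma mulFun_bv_left_ne (β : TwoCocycle G) (z : Mor G → ℂ) {A B X Y : G}
    (k : A ⟶ B) (f0 : X ⟶ Y) (hne : A ≠ X) :
    mulFun β (bv (⟨X, Y, f0⟩ : Mor G)) z ⟨A, B, k⟩ = 0 := by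
  rw [mulFun]
  apply Finset.sum_eq_zero
  intro Y' _
  apply Finset.sum_eq_zero
  intro f _
  apply Finset.sum_eq_zero
  intro g _
  rw [bv_ne_fst _ _ hne]
  ring

lemma centreMap_mem_centre (β : TwoCocycle G) (s : Loop G → ℂ)
    (hs : s ∈ VLoop β) : centreMap s ∈ centreSub β := by
  intro x
  funext m
  obtain ⟨A, B, k⟩ := m
  rw [mulFun_centreMap_left, mulFun_centreMap_right]
  refine Finset.sum_nbij' (fun f => Groupoid.inv k ≫ f ≫ k)
    (fun g => k ≫ g ≫ Groupoid.inv k) (by simp) (by simp)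
    (by intro f _; simp [Groupoid.inv_eq_inv]) (by intro g _; simp [Groupoid.inv_eq_inv])
    ?_
  intro f _
  show β.toFun f (Groupoid.inv f ≫ k) * (starRingEnd ℂ) (s ⟨A, f⟩)
      * x ⟨A, B, Groupoid.inv f ≫ k⟩ =
    β.toFun (k ≫ Groupoid.inv (Groupoid.inv k ≫ f ≫ k)) (Groupoid.inv k ≫ f ≫ k)
      * x ⟨A, B, k ≫ Groupoid.inv (Groupoid.inv k ≫ f ≫ k)⟩
      * (starRingEnd ℂ) (s ⟨B, Groupoid.inv k ≫ f ≫ k⟩)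
  have harg : k ≫ Groupoid.inv (Groupoid.inv k ≫ f ≫ k) = Groupoid.inv f ≫ k := by
    simp [Groupoid.inv_eq_inv]
  rw [harg]
  have hrel := hs A B f k
  rw [show cnj f k = Groupoid.inv k ≫ f ≫ k from rfl] at hrel
  rw [hrel]
  rw [tBeta]
  rw [show cnj f k = Groupoid.inv k ≫ f ≫ k from rfl]
  simp only [map_mul, map_inv₀, conj_beta, inv_inv]
  have key := β.cocycle f (Groupoid.inv f ≫ k) (Groupoid.inv k ≫ f ≫ k)
  have h1 : (Groupoid.inv f ≫ k) ≫ Groupoid.inv k ≫ f ≫ k = k := by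
    simp [Groupoid.inv_eq_inv]
  have h2 : f ≫ Groupoid.inv f ≫ k = k := by
    simp [Groupoid.inv_eq_inv]
  rw [h1, h2] at key
  have hne1 := beta_ne_zero β k (Groupoid.inv k ≫ f ≫ k)
  simp only [Groupoid.inv_eq_inv] at key hne1 ⊢
  field_simp
  linear_combination (-1 : ℂ) * ((starRingEnd ℂ) (s ⟨A, f⟩) * x ⟨A, B, inv f ≫ k⟩) * key

lemma centreMap_add (a b : Loop G → ℂ) :
    centreMap (a + b) = centreMap a + centreMap b := by
  simp only [centreMap, Pi.add_apply, map_add, add_smul, Finset.sum_add_distrib]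

lemma centreMap_conj_smul (c : ℂ) (a : Loop G → ℂ) :
    centreMap (c • a) = (starRingEnd ℂ) c • centreMap a := by
  simp only [centreMap, Pi.smul_apply, smul_eq_mul, map_mul, Finset.smul_sum, smul_smul]

end Helpers

/-- `s ↦ ∑ conj(s(g)) |g⟩` is a bijection from `V_{Λ𝒢}(t(β))` onto the
centre `Z(ℂ[𝒢]^β)`; in particular the two spaces have the same complex dimension. -/
theorem centreMap_bijOn_and_dim
    (G : Type) [Groupoid.{0} G] [Fintype G] [∀ X Y : G, Fintype (X ⟶ Y)]
    [DecidableEq G] [∀ X Y : G, DecidableEq (X ⟶ Y)] (β : TwoCocycle G) :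
    Set.BijOn centreMap (VLoop β : Set (Loop G → ℂ)) (centreSub β : Set (Mor G → ℂ)) ∧
    Module.finrank ℂ (VLoop β) = Module.finrank ℂ (centreSub β) := by
  have hmaps : Set.MapsTo centreMap (VLoop β : Set (Loop G → ℂ))
      (centreSub β : Set (Mor G → ℂ)) := fun s hs => centreMap_mem_centre β s hs
  have hinj : Set.InjOn centreMap (VLoop β : Set (Loop G → ℂ)) := by
    intro s _ s' _ h
    funext l
    obtain ⟨X, g⟩ := l
    have h2 := congrFun h ⟨X, X, g⟩
    rw [centreMap_apply_loop, centreMap_apply_loop] at h2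
    exact star_injective h2
  have hsurj : Set.SurjOn centreMap (VLoop β : Set (Loop G → ℂ))
      (centreSub β : Set (Mor G → ℂ)) := by
    intro z hz
    have hz' : ∀ x : Mor G → ℂ, mulFun β z x = mulFun β x z := hz
    have hz0 : ∀ (A B : G) (k : A ⟶ B), A ≠ B → z ⟨A, B, k⟩ = 0 := by
      intro A B k hAB
      have h := congrFun (hz' (bv (⟨B, B, 𝟙 B⟩ : Mor G))) ⟨A, B, k⟩
      rw [mulFun_bv_right, mulFun_bv_left_ne β z k (𝟙 B) hAB] at h
      simpa [Groupoid.inv_eq_inv, β.id_right] using h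
    have hz2 : ∀ (X Y : G) (g : X ⟶ X) (h : X ⟶ Y),
        β.toFun g h * z ⟨X, X, g⟩ = β.toFun h (cnj g h) * z ⟨Y, Y, cnj g h⟩ := by
      intro X Y g h
      have hc := congrFun (hz' (bv (⟨X, Y, h⟩ : Mor G))) ⟨X, Y, g ≫ h⟩
      rw [mulFun_bv_right β z X Y X (g ≫ h) h, mulFun_bv_left β z X Y Y (g ≫ h) h] at hc
      have e1 : (g ≫ h) ≫ Groupoid.inv h = g := by simp [Groupoid.inv_eq_inv]
      rw [e1] at hc
      exact hc
    refine ⟨fun l => (starRingEnd ℂ) (z ⟨l.1, l.1, l.2⟩), ?_, ?_⟩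
    · intro X Y g h
      show (starRingEnd ℂ) (z ⟨Y, Y, cnj g h⟩) =
        tBeta β g h * (starRingEnd ℂ) (z ⟨X, X, g⟩)
      have h2 := hz2 X Y g h
      have hb := beta_ne_zero β h (cnj g h)
      have hb2 := beta_ne_zero β g h
      have hzz : z ⟨Y, Y, cnj g h⟩ =
          (β.toFun h (cnj g h))⁻¹ * (β.toFun g h * z ⟨X, X, g⟩) := by
        field_simp
        linear_combination -h2
      rw [hzz, tBeta]
      simp only [map_mul, map_inv₀, conj_beta, inv_inv]
      ring
    · funext m
      obtain ⟨A, B, k⟩ := m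
      by_cases hAB : A = B
      · subst hAB
        rw [centreMap_apply_loop]
        simp
      · rw [centreMap_apply_ne _ hAB, hz0 A B k hAB]
  refine ⟨⟨hmaps, hinj, hsurj⟩, ?_⟩
  let j : ↥(VLoop β) ≃+ ↥(centreSub β) :=
    { toFun := fun s => ⟨centreMap s.1, hmaps s.2⟩
      invFun := fun z => ⟨(hsurj z.2).choose, (hsurj z.2).choose_spec.1⟩
      left_inv := fun s => Subtype.ext
        (hinj (hsurj (hmaps s.2)).choose_spec.1 s.2 (hsurj (hmaps s.2)).choose_spec.2)
      right_inv := fun z => Subtype.ext (hsurj z.2).choose_spec.2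
      map_add' := fun a b => Subtype.ext (centreMap_add a.1 b.1) }
  have hconj : Function.Bijective (starRingEnd ℂ) :=
    Function.Involutive.bijective (fun z => by simp)
  have hrank : Module.rank ℂ ↥(VLoop β) = Module.rank ℂ ↥(centreSub β) := by
    refine rank_eq_of_equiv_equiv (starRingEnd ℂ) j hconj ?_
    intro r m
    exact Subtype.ext (centreMap_conj_smul r m.1)
  exact congrArg Cardinal.toNat hrank
end

section
/- Let G be a finite group and π a normalized U(1)-valued 4-cocycle on G. Then the transgression t(π), defined on composable triples of morphisms of the loop groupoid ΛG by t(π)(a → b, a^b → c, a^{bc} → d) := π(b, a^b, c, d) · π(b, c, d, a^{bcd}) · π(a,b,c,d)⁻¹ · π(b, c, a^{bc}, d)⁻¹ (where x^y := y⁻¹xy), is a normalized groupoid 3-cocycle on ΛG: for all a, b, c, d, e ∈ G, t(π)(a^b → c, a^{bc} → d, a^{bcd} → e) · t(π)(a → b, a^b → cd, a^{bcd} → e) · t(π)(a → b, a^b → c, a^{bc} → d) = t(π)(a → bc, a^{bc} → d, a^{bcd} → e) · t(π)(a → b, a^b → c, a^{bc} → de), and t(π)(a → b, a^b → c, a^{bc}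 → d) = 1 whenever any of b, c, d equals the identity of G. -/
set_option maxHeartbeats 4000000


/-- A normalized `U(1)`-valued 4-cocycle on a group `G`. -/
structure FourCocycle (G : Type) [Group G] : Type where
  toFun : G → G → G → G → ℂ
  abs_toFun : ∀ a b c d : G, ‖toFun a b c d‖ = 1
  cocycle : ∀ g₁ g₂ g₃ g₄ g₅ : G,
    toFun g₂ g₃ g₄ g₅ * toFun g₁ (g₂ * g₃) g₄ g₅ * toFun g₁ g₂ g₃ (g₄ * g₅)
      = toFun (g₁ * g₂) g₃ g₄ g₅ * toFun g₁ g₂ (g₃ * g₄) g₅ * toFun g₁ g₂ g₃ g₄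
  normalized : ∀ a b c d : G, a = 1 ∨ b = 1 ∨ c = 1 ∨ d = 1 → toFun a b c d = 1

/-- Conjugation `x^y = y⁻¹ x y` in a group. -/
def cj {G : Type} [Group G] (x y : G) : G := y⁻¹ * x * y

/-- The transgression `t(π)` of a 4-cocycle `π` on `G`, a 3-cocycle on the loop groupoid
`ΛG`, evaluated on the composable triple `(a → b, a^b → c, a^{bc} → d)`:
`t(π) = π(b, a^b, c, d) π(b, c, d, a^{bcd}) π(a,b,c,d)⁻¹ π(b, c, a^{bc}, d)⁻¹`. -/
noncomputable def tpi {G : Type} [Group G] (π : FourCocycle G) (a b c d : G) : ℂ :=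
  π.toFun b (cj a b) c d * π.toFun b c d (cj a (b * c * d)) *
    (π.toFun a b c d)⁻¹ * (π.toFun b c (cj a (b * c)) d)⁻¹

/-- For a finite group `G` with normalized 4-cocycle `π`, the
transgression `t(π)` is a normalized groupoid 3-cocycle on the loop groupoid `ΛG`. -/
theorem tpi_threeCocycle
    (G : Type) [Group G] [Fintype G] (π : FourCocycle G) :
    (∀ a b c d e : G,
      tpi π (cj a b) c d e * tpi π a b (c * d) e * tpi π a b c d
        = tpi π a (b * c) d e * tpi π a b c (d * e)) ∧
    (∀ a b c d : G, b = 1 ∨ c = 1 ∨ d = 1 → tpi π a b c d = 1) := by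
  constructor
  · intro a b c d e
    have hne : ∀ w x y z : G, π.toFun w x y z ≠ 0 := by
      intro w x y z h
      have h' := π.abs_toFun w x y z
      rw [h] at h'; simp at h'
    have h0 := π.cocycle a b c d e
    have h1 := π.cocycle b (cj a b) c d e
    have h2 := π.cocycle b c (cj a (b * c)) d e
    have h3 := π.cocycle b c d (cj a (b * c * d)) e
    have h4 := π.cocycle b c d e (cj a (b * c * d * e))
    simp only [tpi, cj, mul_assoc, mul_inv_rev, inv_inv, one_mul, mul_one,
      inv_mul_cancel_left, mul_inv_cancel_left] at h0 h1 h2 h3 h4 ⊢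
    have hX : (π.toFun (a * b) c d e * (π.toFun a b (c * d) e * π.toFun a b c d)) * (π.toFun (b⁻¹ * (a * b)) c d e * (π.toFun b (b⁻¹ * (a * (b * c))) d e * π.toFun b (b⁻¹ * (a * b)) c (d * e))) * (π.toFun (b * c) (c⁻¹ * (b⁻¹ * (a * (b * c)))) d e * (π.toFun b c (c⁻¹ * (b⁻¹ * (a * (b * (c * d))))) e * π.toFun b c (c⁻¹ * (b⁻¹ * (a * (b * c)))) d)) * (π.toFun c d (d⁻¹ * (c⁻¹ * (b⁻¹ * (a * (b * (c * d)))))) e * (π.toFun b (c * d) (d⁻¹ * (c⁻¹ * (b⁻¹ * (a * (b * (c * d)))))) e * π.toFun b c d (d⁻¹ * (c⁻¹ * (b⁻¹ * (a * (b * (c * (d * e))))))))) * (π.toFun (b * c) d e (e⁻¹ * (d⁻¹ * (c⁻¹ * (b⁻¹ * (a * (b * (c * (d * e)))))))) * (π.toFun b c (d * e) (e⁻¹ * (d⁻¹ * (c⁻¹ * (b⁻¹ * (a * (b * (c * (d * e)))))))) * π.toFun b c d e)) = (π.toFun b c d e * (π.toFun a (b * c) d e * π.toFun a b c (d * e)))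 * (π.toFun (a * b) c d e * (π.toFun b (b⁻¹ * (a * b)) (c * d) e * π.toFun b (b⁻¹ * (a * b)) c d)) * (π.toFun c (c⁻¹ * (b⁻¹ * (a * (b * c)))) d e * (π.toFun b (b⁻¹ * (a * (b * c))) d e * π.toFun b c (c⁻¹ * (b⁻¹ * (a * (b * c)))) (d * e))) * (π.toFun (b * c) d (d⁻¹ * (c⁻¹ * (b⁻¹ * (a * (b * (c * d)))))) e * (π.toFun b c (c⁻¹ * (b⁻¹ * (a * (b * (c * d))))) e * π.toFun b c d (d⁻¹ * (c⁻¹ * (b⁻¹ * (a * (b * (c * d)))))))) * (π.toFun c d e (e⁻¹ * (d⁻¹ * (c⁻¹ * (b⁻¹ * (a * (b * (c * (d * e)))))))) * (π.toFun b (c * d) e (e⁻¹ * (d⁻¹ * (c⁻¹ * (b⁻¹ * (a * (b * (c * (d * e)))))))) * π.toFun b c d (d⁻¹ * (c⁻¹ * (b⁻¹ * (a * (b * (c * (d * e))))))))) := by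
      rw [h0, h1, h2, h3, h4]
    have key : (π.toFun c (c⁻¹ * (b⁻¹ * (a * (b * c)))) d e * π.toFun c d e (e⁻¹ * (d⁻¹ * (c⁻¹ * (b⁻¹ * (a * (b * (c * (d * e)))))))) * π.toFun b (b⁻¹ * (a * b)) (c * d) e * π.toFun b (c * d) e (e⁻¹ * (d⁻¹ * (c⁻¹ * (b⁻¹ * (a * (b * (c * (d * e)))))))) * π.toFun b (b⁻¹ * (a * b)) c d * π.toFun b c d (d⁻¹ * (c⁻¹ * (b⁻¹ * (a * (b * (c * d))))))) * (π.toFun a (b * c) d e * π.toFun (b * c) d (d⁻¹ * (c⁻¹ * (b⁻¹ * (a * (b * (c * d)))))) e * π.toFun a b c (d * e) * π.toFun b c (c⁻¹ * (b⁻¹ * (a * (b * c)))) (d * e)) * ((π.toFun (a * b) c d e * (π.toFun a b (c * d) e * π.toFun a b c d)) * (π.toFun (b⁻¹ * (a * b)) c d e * (π.toFun b (b⁻¹ * (a * (b * c))) d e * π.toFun b (b⁻¹ * (a * b)) c (d * e))) * (π.toFun (b * c) (c⁻¹ * (b⁻¹ * (a * (b * c)))) d e * (π.toFun b c (c⁻¹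 * (b⁻¹ * (a * (b * (c * d))))) e * π.toFun b c (c⁻¹ * (b⁻¹ * (a * (b * c)))) d)) * (π.toFun c d (d⁻¹ * (c⁻¹ * (b⁻¹ * (a * (b * (c * d)))))) e * (π.toFun b (c * d) (d⁻¹ * (c⁻¹ * (b⁻¹ * (a * (b * (c * d)))))) e * π.toFun b c d (d⁻¹ * (c⁻¹ * (b⁻¹ * (a * (b * (c * (d * e))))))))) * (π.toFun (b * c) d e (e⁻¹ * (d⁻¹ * (c⁻¹ * (b⁻¹ * (a * (b * (c * (d * e)))))))) * (π.toFun b c (d * e) (e⁻¹ * (d⁻¹ * (c⁻¹ * (b⁻¹ * (a * (b * (c * (d * e)))))))) * π.toFun b c d e)))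
        = (π.toFun (b * c) (c⁻¹ * (b⁻¹ * (a * (b * c)))) d e * π.toFun (b * c) d e (e⁻¹ * (d⁻¹ * (c⁻¹ * (b⁻¹ * (a * (b * (c * (d * e)))))))) * π.toFun b (b⁻¹ * (a * b)) c (d * e) * π.toFun b c (d * e) (e⁻¹ * (d⁻¹ * (c⁻¹ * (b⁻¹ * (a * (b * (c * (d * e))))))))) * (π.toFun (b⁻¹ * (a * b)) c d e * π.toFun c d (d⁻¹ * (c⁻¹ * (b⁻¹ * (a * (b * (c * d)))))) e * π.toFun a b (c * d) e * π.toFun b (c * d) (d⁻¹ * (c⁻¹ * (b⁻¹ * (a * (b * (c * d)))))) e * π.toFun a b c d * π.toFun b c (c⁻¹ * (b⁻¹ * (a * (b * c)))) d) * ((π.toFun b c d e * (π.toFun a (b * c) d e * π.toFun a b c (d * e))) * (π.toFun (a * b) c d e * (π.toFun b (b⁻¹ * (a * b)) (c * d) e * π.toFun b (b⁻¹ * (a * b)) c d)) * (π.toFun c (c⁻¹ * (b⁻¹ * (a * (b * c)))) d e * (π.toFun b (b⁻¹ * (a * (b * c))) d e * π.toFun b c (c⁻¹ * (b⁻¹ *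 (a * (b * c)))) (d * e))) * (π.toFun (b * c) d (d⁻¹ * (c⁻¹ * (b⁻¹ * (a * (b * (c * d)))))) e * (π.toFun b c (c⁻¹ * (b⁻¹ * (a * (b * (c * d))))) e * π.toFun b c d (d⁻¹ * (c⁻¹ * (b⁻¹ * (a * (b * (c * d)))))))) * (π.toFun c d e (e⁻¹ * (d⁻¹ * (c⁻¹ * (b⁻¹ * (a * (b * (c * (d * e)))))))) * (π.toFun b (c * d) e (e⁻¹ * (d⁻¹ * (c⁻¹ * (b⁻¹ * (a * (b * (c * (d * e)))))))) * π.toFun b c d (d⁻¹ * (c⁻¹ * (b⁻¹ * (a * (b * (c * (d * e)))))))))) := by ring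
    rw [hX] at key
    have main : (π.toFun c (c⁻¹ * (b⁻¹ * (a * (b * c)))) d e * π.toFun c d e (e⁻¹ * (d⁻¹ * (c⁻¹ * (b⁻¹ * (a * (b * (c * (d * e)))))))) * π.toFun b (b⁻¹ * (a * b)) (c * d) e * π.toFun b (c * d) e (e⁻¹ * (d⁻¹ * (c⁻¹ * (b⁻¹ * (a * (b * (c * (d * e)))))))) * π.toFun b (b⁻¹ * (a * b)) c d * π.toFun b c d (d⁻¹ * (c⁻¹ * (b⁻¹ * (a * (b * (c * d))))))) * (π.toFun a (b * c) d e * π.toFun (b * c) d (d⁻¹ * (c⁻¹ * (b⁻¹ * (a * (b * (c * d)))))) e * π.toFun a b c (d * e) * π.toFun b c (c⁻¹ * (b⁻¹ * (a * (b * c)))) (d * e)) = (π.toFun (b * c) (c⁻¹ * (b⁻¹ * (a * (b * c)))) d e * π.toFun (b * c) d e (e⁻¹ * (d⁻¹ * (c⁻¹ * (b⁻¹ * (a * (b * (c * (d * e)))))))) * π.toFun b (b⁻¹ * (a * b)) c (d * e) * π.toFun b c (d * e) (e⁻¹ * (d⁻¹ * (c⁻¹ * (b⁻¹ * (a * (b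 * (c * (d * e))))))))) * (π.toFun (b⁻¹ * (a * b)) c d e * π.toFun c d (d⁻¹ * (c⁻¹ * (b⁻¹ * (a * (b * (c * d)))))) e * π.toFun a b (c * d) e * π.toFun b (c * d) (d⁻¹ * (c⁻¹ * (b⁻¹ * (a * (b * (c * d)))))) e * π.toFun a b c d * π.toFun b c (c⁻¹ * (b⁻¹ * (a * (b * c)))) d) :=
      mul_right_cancel₀ (by apply_rules [mul_ne_zero, hne]) key
    field_simp
    field_simp [hne]
    linear_combination main
  · intro a b c d h
    rcases h with rfl | rfl | rfl <;>
      simp [tpi, cj, π.normalized]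
end

section
/- Let 𝒢 be a finite groupoid and β a normalized U(1)-valued 2-cocycle on 𝒢. Then the twisted groupoid algebra ℂ[𝒢]^β is a semisimple ring: every left ℂ[𝒢]^β-module is a direct sum of simple modules. -/
open CategoryTheory

/-- A realization of the twisted groupoid algebra `ℂ[𝒢]^β`: a unital associative
`ℂ`-algebra with a basis `{|g⟩}` indexed by the morphisms of `𝒢`, whose product is the
`β`-twisted convolution and whose unit is `∑_X |id_X⟩`. -/
structure TwistedGroupoidAlgebra (G : Type) [Groupoid.{0} G] [Fintype G]
    [∀ X Y : G, Fintype (X ⟶ Y)] (β : TwoCocycle G) : Type 1 where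
  carrier : Type
  [ring : Ring carrier]
  [alg : Algebra ℂ carrier]
  basis : Module.Basis (Mor G) ℂ carrier
  mul_basis_comp : ∀ {X Y Z : G} (f : X ⟶ Y) (g : Y ⟶ Z),
    basis ⟨X, Y, f⟩ * basis ⟨Y, Z, g⟩ = β.toFun f g • basis ⟨X, Z, f ≫ g⟩
  mul_basis_ncomp : ∀ f g : Mor G, f.2.1 ≠ g.1 → basis f * basis g = 0
  one_eq : (1 : carrier) = ∑ X : G, basis ⟨X, X, 𝟙 X⟩

namespace TwistedGroupoidAlgebra

variable {G : Type} [Groupoid.{0} G] [Fintype G] [∀ X Y : G, Fintype (X ⟶ Y)]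
    {β : TwoCocycle G}

instance (A : TwistedGroupoidAlgebra G β) : Ring A.carrier := A.ring
instance (A : TwistedGroupoidAlgebra G β) : Algebra ℂ A.carrier := A.alg

end TwistedGroupoidAlgebra

section SemisimpleAux

open ComplexConjugate

variable {G : Type} [Groupoid.{0} G] [Fintype G] [∀ X Y : G, Fintype (X ⟶ Y)]
  {β : TwoCocycle G}

lemma TwoCocycle.ne_zero {X Y Z : G} (f : X ⟶ Y) (g : Y ⟶ Z) : β.toFun f g ≠ 0 := by
  intro h0
  have h := β.abs_toFun f g
  rw [h0] at h
  simp at h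

lemma TwoCocycle.mul_conj {X Y Z : G} (f : X ⟶ Y) (g : Y ⟶ Z) :
    β.toFun f g * conj (β.toFun f g) = 1 := by
  have h := β.abs_toFun f g
  rw [Complex.mul_conj, Complex.normSq_eq_norm_sq, h]
  norm_num

lemma TwoCocycle.conj_eq_inv {X Y Z : G} (f : X ⟶ Y) (g : Y ⟶ Z) :
    conj (β.toFun f g) = (β.toFun f g)⁻¹ :=
  (inv_eq_of_mul_eq_one_right (TwoCocycle.mul_conj (β := β) f g)).symm

/-- The inverse of a morphism, as a map on the total morphism type. -/
def invMor {G : Type} [Groupoid.{0} G] (m : Mor G) : Mor G :=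
  ⟨m.2.1, m.1, Groupoid.inv m.2.2⟩

lemma invMor_invMor {G : Type} [Groupoid.{0} G] (m : Mor G) : invMor (invMor m) = m := by
  obtain ⟨X, Y, f⟩ := m
  simp [invMor, Groupoid.inv_eq_inv]

/-- Coordinate linear equivalence onto Euclidean space. -/
noncomputable def eL (A : TwistedGroupoidAlgebra G β) :
    A.carrier ≃ₗ[ℂ] EuclideanSpace ℂ (Mor G) :=
  A.basis.equivFun.trans (WithLp.linearEquiv 2 ℂ (Mor G → ℂ)).symm

lemma eL_apply (A : TwistedGroupoidAlgebra G β) (x : A.carrier) (m : Mor G) :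
    eL A x m = A.basis.repr x m := rfl

lemma inner_eL (A : TwistedGroupoidAlgebra G β) (x y : A.carrier) :
    (inner ℂ (eL A x) (eL A y) : ℂ) =
      ∑ m : Mor G, conj (A.basis.repr x m) * A.basis.repr y m := by
  rw [PiLp.inner_apply]
  simp [RCLike.inner_apply, eL_apply]
  exact Finset.sum_congr rfl fun _ _ => mul_comm _ _

open scoped Classical in
lemma inner_eL_basis (A : TwistedGroupoidAlgebra G β) (m m' : Mor G) :
    (inner ℂ (eL A (A.basis m)) (eL A (A.basis m')) : ℂ) = if m = m' then 1 else 0 := by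
  rw [inner_eL, Finset.sum_eq_single m]
  · simp [Module.Basis.repr_self, Finsupp.single_apply, eq_comm]
  · intro j _ hj
    simp [Module.Basis.repr_self, Finsupp.single_apply, Ne.symm hj]
  · intro hm
    exact absurd (Finset.mem_univ m) hm

lemma key_basis (A : TwistedGroupoidAlgebra G β) (h f g : Mor G) :
    (inner ℂ (eL A (A.basis h * A.basis f)) (eL A (A.basis g)) : ℂ)
      = conj (β.toFun (Groupoid.inv h.2.2) h.2.2)
        * inner ℂ (eL A (A.basis f)) (eL A (A.basis (invMor h) * A.basis g)) := by
  classical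
  obtain ⟨U, V, hm⟩ := h
  obtain ⟨X, Y, fm⟩ := f
  obtain ⟨W, Z, gm⟩ := g
  simp only [invMor]
  by_cases hVX : V = X
  · subst hVX
    rw [A.mul_basis_comp hm fm]
    by_cases hUW : U = W
    · subst hUW
      rw [A.mul_basis_comp (Groupoid.inv hm) gm, map_smul, map_smul, inner_smul_left,
        inner_smul_right, inner_eL_basis, inner_eL_basis]
      by_cases hYZ : Y = Z
      · subst hYZ
        by_cases hcc : hm ≫ fm = gm
        · have e1 : ((⟨U, Y, hm ≫ fm⟩ : Mor G) = ⟨U, Y, gm⟩) := by rw [hcc]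
          have e2 : ((⟨V, Y, fm⟩ : Mor G) = ⟨V, Y, Groupoid.inv hm ≫ gm⟩) := by
            rw [← hcc, ← Category.assoc, Groupoid.inv_comp, Category.id_comp]
          rw [if_pos e1, if_pos e2, mul_one, mul_one]
          subst hcc
          have hco := β.cocycle (Groupoid.inv hm) hm fm
          rw [Groupoid.inv_comp, β.id_left, one_mul] at hco
          rw [TwoCocycle.conj_eq_inv, TwoCocycle.conj_eq_inv]
          have hcne := TwoCocycle.ne_zero (β := β) (Groupoid.inv hm) (hm ≫ fm)
          rw [← hco, mul_inv, mul_assoc, inv_mul_cancel₀ hcne, mul_one]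
        · have e1 : ¬ ((⟨U, Y, hm ≫ fm⟩ : Mor G) = ⟨U, Y, gm⟩) := by
            intro he
            apply hcc
            simpa using he
          have e2 : ¬ ((⟨V, Y, fm⟩ : Mor G) = ⟨V, Y, Groupoid.inv hm ≫ gm⟩) := by
            intro he
            apply hcc
            have hfm : fm = Groupoid.inv hm ≫ gm := by simpa using he
            rw [hfm, ← Category.assoc, Groupoid.comp_inv, Category.id_comp]
          rw [if_neg e1, if_neg e2]
          ring
      · have e1 : ¬ ((⟨U, Y, hm ≫ fm⟩ : Mor G) = ⟨U, Z, gm⟩) := by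
          intro he
          exact hYZ (congrArg (fun s => s.2.1) he)
        have e2 : ¬ ((⟨V, Y, fm⟩ : Mor G) = ⟨V, Z, Groupoid.inv hm ≫ gm⟩) := by
          intro he
          exact hYZ (congrArg (fun s => s.2.1) he)
        rw [if_neg e1, if_neg e2]
        ring
    · have e1 : ¬ ((⟨U, Y, hm ≫ fm⟩ : Mor G) = ⟨W, Z, gm⟩) := by
        intro he
        exact hUW (congrArg (fun s => s.1) he)
      rw [A.mul_basis_ncomp ⟨V, U, Groupoid.inv hm⟩ ⟨W, Z, gm⟩ hUW, map_smul,
        inner_smul_left, inner_eL_basis, if_neg e1, map_zero, inner_zero_right]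
      ring
  · rw [A.mul_basis_ncomp ⟨U, V, hm⟩ ⟨X, Y, fm⟩ hVX, map_zero, inner_zero_left]
    by_cases hUW : U = W
    · subst hUW
      rw [A.mul_basis_comp (Groupoid.inv hm) gm, map_smul, inner_smul_right, inner_eL_basis]
      have e2 : ¬ ((⟨X, Y, fm⟩ : Mor G) = ⟨V, Z, Groupoid.inv hm ≫ gm⟩) := by
        intro he
        exact hVX (congrArg (fun s => s.1) he).symm
      rw [if_neg e2]
      ring
    · rw [A.mul_basis_ncomp ⟨V, U, Groupoid.inv hm⟩ ⟨W, Z, gm⟩ hUW, map_zero,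
        inner_zero_right]
      ring

lemma key (A : TwistedGroupoidAlgebra G β) (h : Mor G) (x y : A.carrier) :
    (inner ℂ (eL A (A.basis h * x)) (eL A y) : ℂ)
      = conj (β.toFun (Groupoid.inv h.2.2) h.2.2)
        * inner ℂ (eL A x) (eL A (A.basis (invMor h) * y)) := by
  rw [← A.basis.sum_repr x, ← A.basis.sum_repr y]
  simp only [Finset.mul_sum, mul_smul_comm, map_sum, map_smul, sum_inner, inner_sum,
    inner_smul_left, inner_smul_right, Finset.mul_sum]
  refine Finset.sum_congr rfl fun f _ => Finset.sum_congr rfl fun g _ => ?_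
  rw [key_basis]
  ring

end SemisimpleAux

/-- The twisted groupoid algebra `ℂ[𝒢]^β` of a finite groupoid is a
semisimple ring: every left module over it is semisimple, i.e. a direct sum of simple
modules. -/
theorem twistedGroupoidAlgebra_isSemisimpleRing
    (G : Type) [Groupoid.{0} G] [Fintype G] [∀ X Y : G, Fintype (X ⟶ Y)]
    (β : TwoCocycle G) (A : TwistedGroupoidAlgebra G β) :
    IsSemisimpleRing A.carrier ∧
    ∀ (M : Type) [AddCommGroup M] [Module A.carrier M], IsSemisimpleModule A.carrier M := by
  classical
  have main : IsSemisimpleRing A.carrier := by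
    refine { exists_isCompl := fun p => ?_ }
    -- the image of `p` in Euclidean space
    set E := EuclideanSpace ℂ (Mor G)
    set q : Submodule ℂ E := (p.restrictScalars ℂ).map (eL A : A.carrier →ₗ[ℂ] E) with hq
    haveI : CompleteSpace q := FiniteDimensional.complete ℂ q
    have hcompl : IsCompl q qᗮ := Submodule.isCompl_orthogonal_of_hasOrthogonalProjection
    set c : Submodule ℂ A.carrier := qᗮ.comap (eL A : A.carrier →ₗ[ℂ] E) with hc
    have hmemc : ∀ z : A.carrier,
        z ∈ c ↔ ∀ u ∈ p, (inner ℂ (eL A u) (eL A z) : ℂ) = 0 := by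
      intro z
      rw [hc, Submodule.mem_comap, Submodule.mem_orthogonal]
      constructor
      · intro hz u hu
        exact hz (eL A u) ⟨u, by simpa using hu, rfl⟩
      · rintro hz v ⟨u, hu, rfl⟩
        exact hz u (by simpa using hu)
    set P : Submodule A.carrier A.carrier :=
      { carrier := (c : Set A.carrier)
        add_mem' := fun ha hb => c.add_mem ha hb
        zero_mem' := c.zero_mem
        smul_mem' := by
          intro a z hz
          have hz' : z ∈ c := hz
          rw [SetLike.mem_coe, hmemc]
          intro u hu
          rw [smul_eq_mul, ← A.basis.sum_repr a, Finset.sum_mul]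
          simp only [smul_mul_assoc, map_sum, map_smul, inner_sum, inner_smul_right]
          refine Finset.sum_eq_zero fun m _ => ?_
          have hk := key A (invMor m) u z
          rw [invMor_invMor] at hk
          have hiu : A.basis (invMor m) * u ∈ p := by
            have := p.smul_mem (A.basis (invMor m)) hu
            rwa [smul_eq_mul] at this
          have h0 : (inner ℂ (eL A (A.basis (invMor m) * u)) (eL A z) : ℂ) = 0 :=
            (hmemc z).mp hz' _ hiu
          rw [h0] at hk
          have hne : (starRingEnd ℂ) (β.toFun (Groupoid.inv (invMor m).2.2) (invMor m).2.2) ≠ 0 := by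
            simp only [ne_eq, map_eq_zero]
            exact TwoCocycle.ne_zero _ _
          have := (mul_eq_zero.mp hk.symm).resolve_left hne
          rw [this, mul_zero] } with hP
    have hmemP : ∀ z : A.carrier, z ∈ P ↔ z ∈ c := fun z => Iff.rfl
    refine ⟨P, ?_, ?_⟩
    · -- disjoint
      rw [Submodule.disjoint_def]
      intro x hxp hxP
      have hx1 : eL A x ∈ q := ⟨x, by simpa using hxp, rfl⟩
      have hx2 : eL A x ∈ qᗮ := (hmemP x).mp hxP
      have : eL A x ∈ q ⊓ qᗮ := ⟨hx1, hx2⟩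
      rw [hcompl.inf_eq_bot, Submodule.mem_bot] at this
      have := congrArg (eL A).symm this
      simpa using this
    · -- codisjoint
      rw [codisjoint_iff, eq_top_iff]
      intro x _
      have hx : eL A x ∈ q ⊔ qᗮ := by
        rw [hcompl.sup_eq_top]; trivial
      obtain ⟨v, hv, w, hw, hvw⟩ := Submodule.mem_sup.mp hx
      obtain ⟨u, hu, rfl⟩ := hv
      have hu' : u ∈ p := by simpa using hu
      have hxw : x = u + (eL A).symm w := by
        apply (eL A).injective
        simp [← hvw]
      rw [hxw]
      refine Submodule.add_mem_sup hu' ?_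
      rw [hmemP, hc, Submodule.mem_comap]
      simpa using hw
  exact ⟨main, fun M _ _ => inferInstance⟩
end
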